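/- Let s_1, ..., s_n be complex numbers in the first quadrant (Re(s_k) ≥ 0 and Im(s_k) ≥ 0) and let C > 0. If |Σ_{k∈S} s_k| ≤ C for a subset S ⊆ {1,...,n}, and φ ∈ [0, π/2] is an upper bound on arg(s_k) for all k, then Σ_{k∈S} |s_k| ≤ C / cos(φ/2). -/

import Mathlib

theorem complex_to_real_feasibility (n : ℕ) (s : Fin n → ℂ) (C φ : ℝ) (hC : 0 < C)
    (hre : ∀ k, 0 ≤ (s k).re) (him : ∀ k, 0 ≤ (s k).im)
    (hφ0 : 0 ≤ φ) (hφ : φ ≤ Real.pi / 2)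
    (harg : ∀ k, (s k).arg ≤ φ)
    (S : Finset (Fin n))
    (hfeas : ‖∑ k ∈ S, s k‖ ≤ C) :
    ∑ k ∈ S, ‖s k‖ ≤ C / Real.cos (φ / 2) := by
  have hpi := Real.pi_pos
  have hcpos : 0 < Real.cos (φ / 2) :=
    Real.cos_pos_of_mem_Ioo ⟨by linarith, by linarith⟩
  set θ := φ / 2 with hθ
  -- per-term bound
  have key : ∀ k ∈ S, ‖s k‖ * Real.cos θ ≤
      (s k).re * Real.cos θ + (s k).im * Real.sin θ := by
    intro k _
    by_cases h : s k = 0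
    · simp [h]
    · have hr : (s k).re = ‖s k‖ * Real.cos ((s k).arg) := by
        rw [Complex.cos_arg h, mul_div_cancel₀ _ (norm_ne_zero_iff.mpr h)]
      have hi : (s k).im = ‖s k‖ * Real.sin ((s k).arg) := by
        rw [Complex.sin_arg, mul_div_cancel₀ _ (norm_ne_zero_iff.mpr h)]
      have harg0 : 0 ≤ (s k).arg := Complex.arg_nonneg_iff.mpr (him k)
      have hargφ : (s k).arg ≤ φ := harg k
      have htrig : Real.cos θ ≤ Real.cos ((s k).arg - θ) := by
        have h1 : Real.cos ((s k).arg - θ) = Real.cos |(s k).arg - θ| := by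
          rw [Real.cos_abs]
        have habs : |(s k).arg - θ| ≤ θ := by
          rw [abs_le]; constructor <;> [linarith; linarith]
        rw [h1]
        exact Real.cos_le_cos_of_nonneg_of_le_pi (abs_nonneg _) (by linarith) habs
      have hab : 0 ≤ ‖s k‖ := norm_nonneg _
      calc ‖s k‖ * Real.cos θ
          ≤ ‖s k‖ * Real.cos ((s k).arg - θ) := by
            exact mul_le_mul_of_nonneg_left htrig hab
        _ = (s k).re * Real.cos θ + (s k).im * Real.sin θ := by
            rw [Real.cos_sub, hr, hi]; ring
  have hsum : (∑ k ∈ S, ‖s k‖) * Real.cos θ ≤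
      (∑ k ∈ S, s k).re * Real.cos θ + (∑ k ∈ S, s k).im * Real.sin θ := by
    rw [Complex.re_sum, Complex.im_sum]
    simp only [Finset.sum_mul]
    rw [← Finset.sum_add_distrib]
    exact Finset.sum_le_sum key
  set A := (∑ k ∈ S, s k).re
  set B := (∑ k ∈ S, s k).im
  have habsq : ‖∑ k ∈ S, s k‖ = Real.sqrt (A ^ 2 + B ^ 2) := by
    rw [Complex.norm_def, Complex.normSq_apply]; ring_nf; rfl
  have h2 : A * Real.cos θ + B * Real.sin θ ≤ ‖∑ k ∈ S, s k‖ := by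
    rw [habsq]
    nlinarith [Real.sq_sqrt (by positivity : (0:ℝ) ≤ A ^ 2 + B ^ 2),
      Real.sqrt_nonneg (A ^ 2 + B ^ 2), Real.sin_sq_add_cos_sq θ,
      sq_nonneg (A * Real.sin θ - B * Real.cos θ),
      sq_nonneg (Real.sqrt (A ^ 2 + B ^ 2) - (A * Real.cos θ + B * Real.sin θ))]
  rw [le_div_iff₀ hcpos]
  linarith
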